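/- Let m ≥ 2 and p ≥ 3 be integers. If d_{p−1}(m) > m·p·(p−2), then 1/m − (p−2)(p+1)/(2 d_{p−1}(m)) > (p−2)(p−1)/(2 d_p(m)). Here d_k(m) = (1/k) Σ_{d ∣ k} μ(d) m^{k/d}. -/

import Mathlib

/-- `dWitt m k` is `(1/k) * ∑_{d ∣ k} μ(d) m^(k/d)`, the dimension of the space of
Lie polynomials of degree `k` on `m` generators (Witt's formula), as a rational number. -/
noncomputable def dWitt (m k : ℕ) : ℚ :=
  (1 / (k : ℚ)) * ∑ d ∈ k.divisors, ((ArithmeticFunction.moebius d : ℤ) : ℚ) * (m : ℚ) ^ (k / d)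

open Finset ArithmeticFunction

lemma geom_bound (m : ℤ) (hm : 2 ≤ m) : ∀ n : ℕ, ∑ j ∈ Finset.Icc 1 n, m ^ j ≤ 2 * m ^ n := by
  intro n
  induction n with
  | zero => simp
  | succ n ih =>
      rw [show n + 1 = n + 1 from rfl, Finset.sum_Icc_succ_top (by omega)]
      have hpow : (0:ℤ) ≤ m ^ n := by positivity
      have : 2 * m ^ n ≤ m ^ (n+1) := by
        rw [pow_succ]; nlinarith
      nlinarith

lemma tail_bound (m k : ℕ) (hm : 2 ≤ m) (hk : 1 ≤ k) :
    |(∑ d ∈ k.divisors, (moebius d : ℤ) * (m:ℤ) ^ (k / d)) - (m:ℤ) ^ k| ≤ 2 * (m:ℤ) ^ (k / 2) := by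
  have hk0 : k ≠ 0 := by omega
  have h1 : (1:ℕ) ∈ k.divisors := Nat.one_mem_divisors.mpr hk0
  rw [← Finset.sum_erase_add _ _ h1]
  simp only [moebius_apply_one, Nat.div_one]
  have hmz : (2:ℤ) ≤ (m:ℤ) := by exact_mod_cast hm
  have habs : |∑ d ∈ k.divisors.erase 1, (moebius d : ℤ) * (m:ℤ) ^ (k / d)|
      ≤ ∑ d ∈ k.divisors.erase 1, (m:ℤ) ^ (k / d) := by
    refine (Finset.abs_sum_le_sum_abs _ _).trans (Finset.sum_le_sum ?_)
    intro d hd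
    rw [abs_mul, abs_pow, Nat.abs_cast]
    have : |(moebius d : ℤ)| ≤ 1 := abs_moebius_le_one
    have hp : (0:ℤ) ≤ (m:ℤ) ^ (k / d) := by positivity
    nlinarith
  have himg : ∑ d ∈ k.divisors.erase 1, (m:ℤ) ^ (k / d)
      ≤ ∑ j ∈ Finset.Icc 1 (k / 2), (m:ℤ) ^ j := by
    have hinj : ∀ d1 ∈ k.divisors.erase 1, ∀ d2 ∈ k.divisors.erase 1, k / d1 = k / d2 → d1 = d2 := by
      intro d1 hd1 d2 hd2 heq
      have h1 := Nat.mem_divisors.mp (Finset.mem_of_mem_erase hd1)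
      have h2 := Nat.mem_divisors.mp (Finset.mem_of_mem_erase hd2)
      have e1 := Nat.div_div_self h1.1 hk0
      have e2 := Nat.div_div_self h2.1 hk0
      rw [← e1, ← e2, heq]
    rw [← Finset.sum_image (s := k.divisors.erase 1) (f := fun j => (m:ℤ)^j)
      (g := fun d => k / d) hinj]
    apply Finset.sum_le_sum_of_subset_of_nonneg
    · intro j hj
      simp only [Finset.mem_image] at hj
      obtain ⟨d, hd, rfl⟩ := hj
      have hd1 : d ≠ 1 := Finset.ne_of_mem_erase hd
      have hdd := Nat.mem_divisors.mp (Finset.mem_of_mem_erase hd)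
      have hd2 : 2 ≤ d := by
        have := Nat.pos_of_mem_divisors (Finset.mem_of_mem_erase hd)
        omega
      have hle : k / d ≤ k / 2 := Nat.div_le_div_left hd2 (by omega)
      have hge : 1 ≤ k / d := Nat.one_le_div_iff (by omega) |>.mpr (Nat.le_of_dvd (by omega) hdd.1)
      exact Finset.mem_Icc.mpr ⟨hge, hle⟩
    · intro j _ _; positivity
  have hgeo := geom_bound (m:ℤ) hmz (k / 2)
  rw [one_mul, add_sub_cancel_right]
  calc |∑ d ∈ k.divisors.erase 1, (moebius d : ℤ) * (m:ℤ) ^ (k / d)|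
      ≤ ∑ d ∈ k.divisors.erase 1, (m:ℤ) ^ (k / d) := habs
    _ ≤ ∑ j ∈ Finset.Icc 1 (k / 2), (m:ℤ) ^ j := himg
    _ ≤ 2 * (m:ℤ) ^ (k / 2) := hgeo


lemma dWitt_lower (m k : ℕ) (hm : 2 ≤ m) (hk : 1 ≤ k) :
    ((m:ℚ) ^ k - 2 * (m:ℚ) ^ (k / 2)) / k ≤ dWitt m k := by
  have hb := tail_bound m k hm hk
  have hb' := abs_le.mp hb
  have hkq : (0:ℚ) < (k:ℚ) := by exact_mod_cast Nat.pos_of_ne_zero (by omega)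
  rw [dWitt, one_div, inv_mul_eq_div]
  apply div_le_div_of_nonneg_right ?_ hkq.le |>.trans_eq rfl
  have : ((∑ d ∈ k.divisors, (moebius d : ℤ) * (m:ℤ) ^ (k / d) : ℤ) : ℚ)
      = ∑ d ∈ k.divisors, ((moebius d : ℤ) : ℚ) * (m : ℚ) ^ (k / d) := by push_cast; ring
  rw [← this]
  have h2 := hb'.1
  have : ((m:ℤ)^k - 2*(m:ℤ)^(k/2) : ℤ) ≤ ∑ d ∈ k.divisors, (moebius d : ℤ) * (m:ℤ) ^ (k / d) := by
    linarith
  calc ((m:ℚ)^k - 2*(m:ℚ)^(k/2)) = (((m:ℤ)^k - 2*(m:ℤ)^(k/2) : ℤ) : ℚ) := by push_cast; ring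
    _ ≤ _ := by exact_mod_cast this

lemma dWitt_upper (m k : ℕ) (hm : 2 ≤ m) (hk : 1 ≤ k) :
    dWitt m k ≤ ((m:ℚ) ^ k + 2 * (m:ℚ) ^ (k / 2)) / k := by
  have hb := tail_bound m k hm hk
  have hb' := abs_le.mp hb
  have hkq : (0:ℚ) < (k:ℚ) := by exact_mod_cast Nat.pos_of_ne_zero (by omega)
  rw [dWitt, one_div, inv_mul_eq_div]
  apply div_le_div_of_nonneg_right ?_ hkq.le |>.trans_eq rfl
  have hcast : ((∑ d ∈ k.divisors, (moebius d : ℤ) * (m:ℤ) ^ (k / d) : ℤ) : ℚ)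
      = ∑ d ∈ k.divisors, ((moebius d : ℤ) : ℚ) * (m : ℚ) ^ (k / d) := by push_cast; ring
  rw [← hcast]
  have h2 := hb'.2
  have : (∑ d ∈ k.divisors, (moebius d : ℤ) * (m:ℤ) ^ (k / d)) ≤ (m:ℤ)^k + 2*(m:ℤ)^(k/2) := by
    linarith
  calc ((∑ d ∈ k.divisors, (moebius d : ℤ) * (m:ℤ) ^ (k / d) : ℤ) : ℚ)
      ≤ (((m:ℤ)^k + 2*(m:ℤ)^(k/2) : ℤ) : ℚ) := by exact_mod_cast this
    _ = (m:ℚ)^k + 2*(m:ℚ)^(k/2) := by push_cast; ring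

lemma dWitt_two (m : ℕ) : dWitt m 2 = ((m:ℚ)^2 - m) / 2 := by
  rw [dWitt]
  rw [show (Nat.divisors 2) = {1, 2} by decide]
  rw [Finset.sum_insert (by decide), Finset.sum_singleton]
  rw [moebius_apply_one, moebius_apply_prime Nat.prime_two]
  norm_num; ring

lemma dWitt_three (m : ℕ) : dWitt m 3 = ((m:ℚ)^3 - m) / 3 := by
  rw [dWitt]
  rw [show (Nat.divisors 3) = {1, 3} by decide]
  rw [Finset.sum_insert (by decide), Finset.sum_singleton]
  rw [moebius_apply_one, moebius_apply_prime Nat.prime_three]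
  norm_num; ring

lemma dWitt_four (m : ℕ) : dWitt m 4 = ((m:ℚ)^4 - (m:ℚ)^2) / 4 := by
  rw [dWitt]
  rw [show (Nat.divisors 4) = {1, 2, 4} by decide]
  rw [Finset.sum_insert (by decide), Finset.sum_insert (by decide), Finset.sum_singleton]
  rw [moebius_apply_one, moebius_apply_prime Nat.prime_two,
    show ((4:ℕ) = 2^2) by norm_num, moebius_apply_prime_pow Nat.prime_two (by norm_num)]
  norm_num; ring


lemma final_step (M P A B : ℚ) (hM : 2 ≤ M) (hP : 3 ≤ P)
    (hA : A > M * P * (P - 2)) (hB : B ≥ M * P * (P - 2)) :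
    1 / M - (P - 2) * (P + 1) / (2 * A) > (P - 2) * (P - 1) / (2 * B) := by
  have hC : (0:ℚ) < M * P * (P - 2) :=
    mul_pos (mul_pos (by linarith) (by linarith)) (by linarith)
  have hA0 : (0:ℚ) < A := lt_trans hC hA
  have hB0 : (0:ℚ) < B := lt_of_lt_of_le hC hB
  have key1 : (P - 2) * (P + 1) / (2 * A) < (P - 2) * (P + 1) / (2 * (M * P * (P - 2))) := by
    apply div_lt_div_of_pos_left (by nlinarith) (by linarith) (by linarith)
  have key2 : (P - 2) * (P - 1) / (2 * B) ≤ (P - 2) * (P - 1) / (2 * (M * P * (P - 2))) := by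
    apply div_le_div_of_nonneg_left (by nlinarith) (by linarith) (by linarith)
  have idt : (P - 2) * (P - 1) / (2 * (M * P * (P - 2)))
      + (P - 2) * (P + 1) / (2 * (M * P * (P - 2))) = 1 / M := by
    have hP2ne : P - 2 ≠ 0 := ne_of_gt (by linarith)
    have hM0 : M ≠ 0 := ne_of_gt (by linarith)
    have hP0 : P ≠ 0 := ne_of_gt (by linarith)
    field_simp
    ring
  linarith

lemma Pfact (P : ℚ) (hP : 5 ≤ P) : (9*P-8)*(P*(P-2)^2) ≥ 16*(P^2*(P-2)) := by
  nlinarith [sq_nonneg (P-2), sq_nonneg P,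
    mul_nonneg (mul_nonneg (show (0:ℚ) ≤ P-2 by linarith) (show (0:ℚ) ≤ P-2 by linarith))
      (show (0:ℚ) ≤ P by linarith)]

lemma key_big (m p : ℕ) (hm : 2 ≤ m) (hp : 5 ≤ p)
    (h : dWitt m (p - 1) > (m : ℚ) * p * ((p : ℚ) - 2)) :
    dWitt m p ≥ (m : ℚ) * p * ((p : ℚ) - 2) := by
  have hM : (2:ℚ) ≤ (m:ℚ) := by exact_mod_cast hm
  have hP : (5:ℚ) ≤ (p:ℚ) := by exact_mod_cast hp
  have hn : 1 ≤ p - 1 := by omega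
  have hup := dWitt_upper m (p - 1) hm hn
  have hlo := dWitt_lower m p hm (by omega)
  have hcast : (((p-1 : ℕ)) : ℚ) = (p:ℚ) - 1 := by
    push_cast [Nat.cast_sub (by omega : 1 ≤ p)]; ring
  rw [hcast] at hup
  set M : ℚ := (m : ℚ)
  set P : ℚ := (p : ℚ)
  set n := p - 1 with hndef
  set h' := n / 2 with h'def
  set q := p / 2 with hqdef
  have hPn : (0:ℚ) < P - 1 := by linarith
  have hPpos : (0:ℚ) < P := by linarith
  set u : ℚ := M ^ h' with hudef
  set w : ℚ := M ^ q with hwdef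
  have hu4 : (4:ℚ) ≤ u := by
    have h2 : 2 ≤ h' := by omega
    calc (4:ℚ) = 2^2 := by norm_num
      _ ≤ M^2 := by apply pow_le_pow_left₀ (by norm_num) hM
      _ ≤ M^h' := by apply pow_le_pow_right₀ (by linarith) h2
  have hMn_u : u * u ≤ M ^ n := by
    rw [hudef, ← pow_add]
    apply pow_le_pow_right₀ (by linarith) (by omega)
  have hw_le : w ≤ u * M := by
    rw [hwdef, hudef, ← pow_succ]
    apply pow_le_pow_right₀ (by linarith) (by omega)
  have hMp : M ^ p = M ^ n * M := by
    rw [← pow_succ]; congr 1; omega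
  have G1 : (M * P * (P - 2)) * (P - 1) < M ^ n + 2 * u := by
    have h1 := h.trans_le hup
    exact (lt_div_iff₀ hPn).mp h1
  have hu0 : (0:ℚ) < u := by linarith
  have hMn0 : (0:ℚ) < M ^ n := by positivity
  have main : M ^ n ≥ P^2 * (P - 2) + 2 * u := by
    rcases le_or_gt (4 * u) ((M - 2) * (P * (P - 1) * (P - 2)) + P * (P - 2)^2) with hc | hc
    · nlinarith [G1, hc]
    · have hP2 : (3:ℚ) ≤ P - 2 := by linarith
      set v : ℚ := P * (P - 2)^2 with hvdef
      have hu_big : 4 * u > v := by nlinarith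
      have hv9 : v ≥ 9 * P := by nlinarith [hP2, hPpos]
      have hv45 : v ≥ 45 := by linarith
      have h3 : (9*P-8)*v ≥ 16*(P^2*(P-2)) := by
        rw [hvdef]; exact Pfact P hP
      have h5 : 16*(u*u) - 32*u > v*v - 8*v := by
        have hpp := mul_pos (sub_pos.mpr hu_big) (show (0:ℚ) < 4*u + v - 8 by linarith)
        have hexp : 16*(u*u) - 32*u - (v*v - 8*v) = (4*u - v)*(4*u + v - 8) := by ring
        linarith [hpp, hexp]
      have h6 : v*v - 8*v ≥ (9*P-8)*v := by
        have hpp2 := mul_nonneg (sub_nonneg.mpr hv9) (show (0:ℚ) ≤ v by linarith)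
        have hexp2 : v*v - 8*v - (9*P-8)*v = (v - 9*P)*v := by ring
        linarith [hpp2, hexp2]
      have : u * u ≥ P^2 * (P - 2) + 2 * u := by linarith
      linarith [hMn_u]
  have step : M ^ n - 2 * u ≥ P^2 * (P - 2) := by linarith
  have step2 : M * (M ^ n - 2 * u) ≥ M * (P^2 * (P - 2)) :=
    mul_le_mul_of_nonneg_left step (by linarith)
  have goal2 : M ^ p - 2 * w ≥ P * (M * P * (P - 2)) := by
    rw [hMp]
    have e1 : M*(M^n - 2*u) = M^n*M - 2*(u*M) := by ring
    have e2 : M*(P^2*(P-2)) = P*(M*P*(P-2)) := by ring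
    have hw2 : 2*w ≤ 2*(u*M) := by linarith
    linarith [step2, e1, e2, hw2]
  have hlo' : (M ^ p - 2 * w) / P ≤ dWitt m p := hlo
  refine le_trans ?_ hlo'
  rw [le_div_iff₀ hPpos]
  have e3 : M*P*(P-2)*P = P*(M*P*(P-2)) := by ring
  linarith [goal2, e3]

theorem stmt_9 (m p : ℕ) (hm : 2 ≤ m) (hp : 3 ≤ p)
    (h : dWitt m (p - 1) > (m : ℚ) * p * ((p : ℚ) - 2)) :
    1 / (m : ℚ) - ((p : ℚ) - 2) * ((p : ℚ) + 1) / (2 * dWitt m (p - 1)) >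
      ((p : ℚ) - 2) * ((p : ℚ) - 1) / (2 * dWitt m p) := by
  have hM : (2:ℚ) ≤ (m:ℚ) := by exact_mod_cast hm
  have hP : (3:ℚ) ≤ (p:ℚ) := by exact_mod_cast hp
  have key : dWitt m p ≥ (m:ℚ) * p * ((p:ℚ) - 2) := by
    rcases Nat.lt_or_ge p 5 with h5 | h5
    · interval_cases p
      · rw [show (3:ℕ) - 1 = 2 from rfl, dWitt_two] at h
        rw [dWitt_three]
        norm_num at h ⊢
        nlinarith [h, hM]
      · rw [show (4:ℕ) - 1 = 3 from rfl, dWitt_three] at h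
        rw [dWitt_four]
        norm_num at h ⊢
        nlinarith [h, hM]
    · exact key_big m p hm h5 h
  exact final_step (m:ℚ) (p:ℚ) _ _ hM hP h key
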